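/- Let (G_n) be a sequence of finite graphs with vertex subsets W_n ⊆ V(G_n), v_n := |V(G_n)|, such that |W_n|/v_n → 0. For R > 0 and t > 0 set s_n(R,t) := |{x ∈ V(G_n) : |V_R(x)| > t}| and w_n(R) := |{x ∈ V(G_n) : V_R(x) ∩ W_n ≠ ∅}|, where V_R(x) is the vertex set of the ball of radius R about x. If for each R, lim_{t→∞} limsup_{n→∞} s_n(2R,t)/v_n = 0, then for each R, lim_{n→∞} w_n(R)/v_n = 0. -/

import Mathlib

open Filter Topology

/-- The ball of radius `R` about `x` in the graph `G` (vertices reachable from `x` within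
graph distance `R`). -/
def gball {V : Type*} (G : SimpleGraph V) (x : V) (R : ℕ) : Set V :=
  {y | G.Reachable x y ∧ G.dist x y ≤ R}

lemma gball_ncard_biUnion {α : Type*} [Finite α] (s : Set α) (f : α → Set α) (t : ℕ) :
    (∀ w ∈ s, (f w).ncard ≤ t) → (⋃ w ∈ s, f w).ncard ≤ t * s.ncard := by
  refine Set.Finite.induction_on s s.toFinite (by simp) ?_
  intro a s ha hsf ih h
  rw [Set.biUnion_insert]
  calc ((f a ∪ ⋃ w ∈ s, f w).ncard)
      ≤ (f a).ncard + (⋃ w ∈ s, f w).ncard := Set.ncard_union_le _ _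
    _ ≤ t + t * s.ncard := by
        gcongr
        · exact h a (Set.mem_insert a s)
        · exact ih fun w hw => h w (Set.mem_insert_of_mem a hw)
    _ = t * (insert a s).ncard := by
        rw [Set.ncard_insert_of_notMem ha]; ring

lemma key_ineq {V : Type*} [Fintype V] (G : SimpleGraph V) (W : Set V) (R t : ℕ) :
    {x : V | (gball G x R ∩ W).Nonempty}.ncard ≤
      t * W.ncard + {x : V | t < (gball G x (2 * R)).ncard}.ncard := by
  classical
  set W' : Set V := {w ∈ W | (gball G w R).ncard ≤ t} with hW'
  have hsub : {x : V | (gball G x R ∩ W).Nonempty} ⊆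
      (⋃ w ∈ W', gball G w R) ∪ {x : V | t < (gball G x (2 * R)).ncard} := by
    rintro x ⟨y, ⟨hr, hd⟩, hyW⟩
    by_cases hc : (gball G y R).ncard ≤ t
    · left
      refine Set.mem_biUnion ⟨hyW, hc⟩ ⟨hr.symm, ?_⟩
      rwa [SimpleGraph.dist_comm]
    · right
      push_neg at hc
      refine lt_of_lt_of_le hc (Set.ncard_le_ncard ?_ (Set.toFinite _))
      rintro z ⟨hrz, hdz⟩
      refine ⟨hr.trans hrz, ?_⟩
      obtain ⟨p, hp⟩ := hr.exists_walk_length_eq_dist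
      obtain ⟨q, hq⟩ := hrz.exists_walk_length_eq_dist
      calc G.dist x z ≤ (p.append q).length := SimpleGraph.dist_le _
        _ = G.dist x y + G.dist y z := by rw [SimpleGraph.Walk.length_append, hp, hq]
        _ ≤ R + R := add_le_add hd hdz
        _ = 2 * R := by ring
  calc {x : V | (gball G x R ∩ W).Nonempty}.ncard
      ≤ ((⋃ w ∈ W', gball G w R) ∪ {x : V | t < (gball G x (2 * R)).ncard}).ncard :=
        Set.ncard_le_ncard hsub (Set.toFinite _)
    _ ≤ (⋃ w ∈ W', gball G w R).ncard + {x : V | t < (gball G x (2 * R)).ncard}.ncard :=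
        Set.ncard_union_le _ _
    _ ≤ t * W'.ncard + {x : V | t < (gball G x (2 * R)).ncard}.ncard :=
        add_le_add_left (gball_ncard_biUnion W' (fun w => gball G w R) t
          fun w hw => hw.2) _
    _ ≤ t * W.ncard + {x : V | t < (gball G x (2 * R)).ncard}.ncard :=
        add_le_add_left (Nat.mul_le_mul_left t
          (Set.ncard_le_ncard (Set.sep_subset _ _) (Set.toFinite _))) _

/-- Proposition: let `G n` be finite graphs with vertex subsets `W n`, `v n := |V(G n)|`,
with `|W n|/v n → 0`. Set `s n R t := #{x : |V_R(x)| > t}` and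
`w n R := #{x : V_R(x) ∩ W n ≠ ∅}`. If for each `R`,
`lim_{t→∞} limsup_n s n (2R) t / v n = 0`, then for each `R`, `w n R / v n → 0`. -/
theorem stmt18 (V : ℕ → Type*) [∀ n, Fintype (V n)] [∀ n, Nonempty (V n)]
    (G : ∀ n, SimpleGraph (V n)) (W : ∀ n, Set (V n))
    (v : ℕ → ℕ) (hv : ∀ n, v n = Fintype.card (V n))
    (hW : Tendsto (fun n => ((W n).ncard : ℝ) / v n) atTop (𝓝 0))
    (s : ℕ → ℕ → ℕ → ℕ)
    (hs : ∀ n R t, s n R t = Set.ncard {x : V n | t < (gball (G n) x R).ncard})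
    (w : ℕ → ℕ → ℕ)
    (hw : ∀ n R, w n R = Set.ncard {x : V n | (gball (G n) x R ∩ W n).Nonempty})
    (hhyp : ∀ R : ℕ,
      Tendsto (fun t : ℕ => Filter.limsup (fun n => (s n (2 * R) t : ℝ) / v n) atTop)
        atTop (𝓝 0)) :
    ∀ R : ℕ, Tendsto (fun n => (w n R : ℝ) / v n) atTop (𝓝 0) := by
  intro R
  have hvpos : ∀ n, (0:ℝ) < v n := fun n => by
    rw [hv n]; exact_mod_cast Fintype.card_pos
  rw [NormedAddCommGroup.tendsto_nhds_zero]
  intro ε hε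
  -- choose t
  have h2 : ∀ᶠ t in atTop,
      ‖Filter.limsup (fun n => (s n (2 * R) t : ℝ) / v n) atTop‖ < ε / 2 :=
    (NormedAddCommGroup.tendsto_nhds_zero.mp (hhyp R)) (ε/2) (by linarith)
  obtain ⟨t, ht⟩ := h2.exists
  have hbdd : IsBoundedUnder (· ≤ ·) atTop (fun n => (s n (2 * R) t : ℝ) / v n) := by
    refine isBoundedUnder_of ⟨1, fun n => ?_⟩
    have h1 : s n (2 * R) t ≤ v n := by
      rw [hs, hv]
      exact le_trans (Set.ncard_le_ncard (Set.subset_univ _) (Set.toFinite _))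
        (by simp [Set.ncard_univ])
    rw [div_le_one (hvpos n)]
    exact_mod_cast h1
  have hlim : Filter.limsup (fun n => (s n (2 * R) t : ℝ) / v n) atTop < ε / 2 :=
    lt_of_le_of_lt (le_abs_self _) ht
  have hev1 : ∀ᶠ n in atTop, (s n (2 * R) t : ℝ) / v n < ε / 2 :=
    eventually_lt_of_limsup_lt hlim hbdd
  have hWt : Tendsto (fun n => (t : ℝ) * ((W n).ncard / v n)) atTop (𝓝 0) := by
    simpa using hW.const_mul (t : ℝ)
  have hev2 : ∀ᶠ n in atTop, (t : ℝ) * ((W n).ncard / v n) < ε / 2 := by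
    have := (NormedAddCommGroup.tendsto_nhds_zero.mp hWt) (ε/2) (by linarith)
    filter_upwards [this] with n hn
    exact lt_of_le_of_lt (le_abs_self _) hn
  filter_upwards [hev1, hev2] with n h1 h2
  have hkey : (w n R : ℝ) ≤ t * (W n).ncard + s n (2 * R) t := by
    have := key_ineq (G n) (W n) R t
    rw [← hw n R, ← hs n (2 * R) t] at this
    exact_mod_cast this
  have hwnn : (0:ℝ) ≤ (w n R : ℝ) / v n :=
    div_nonneg (Nat.cast_nonneg _) (Nat.cast_nonneg _)
  rw [Real.norm_eq_abs, abs_of_nonneg hwnn]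
  have hdiv : (w n R : ℝ) / v n ≤ ((t : ℝ) * (W n).ncard + s n (2 * R) t) / v n :=
    (div_le_div_iff_of_pos_right (hvpos n)).mpr hkey
  rw [add_div, mul_div_assoc] at hdiv
  linarith
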